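/- arXiv:1802.05558 — 5 statements merged into one kernel-verified Lean document; each statement's English description precedes it below -/
import Mathlib

section
/- Let n ≥ 2 and let A = (a_{ij}) be an n×n real matrix with nonnegative entries such that (1/(n−1))·√(a_{ii}a_{jj}) + √(a_{ij}a_{ji}) ≥ 1 for all i ≠ j. Then the map Φ_A(X) = Δ_A(X) − X is positive. -/
open Matrix
open scoped ComplexOrder

noncomputable section

/-- A map between complex matrix algebras is positive if it maps positive semidefinite
matrices to positive semidefinite matrices. -/
def IsPosMap {m n : ℕ} (Φ : Matrix (Fin m) (Fin m) ℂ → Matrix (Fin n) (Fin n) ℂ) : Prop :=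
  ∀ X, X.PosSemidef → (Φ X).PosSemidef

/-- Blockwise application of a map `Φ : M_m → M_n` to a matrix in `M_k(M_m)`:
`Φ_k (X_{ij}) = (Φ(X_{ij}))`. -/
def blockApply {m n : ℕ} (k : ℕ)
    (Φ : Matrix (Fin m) (Fin m) ℂ → Matrix (Fin n) (Fin n) ℂ)
    (X : Matrix (Fin k × Fin m) (Fin k × Fin m) ℂ) :
    Matrix (Fin k × Fin n) (Fin k × Fin n) ℂ :=
  Matrix.of fun p q => Φ (Matrix.of fun i j => X (p.1, i) (q.1, j)) p.2 q.2

/-- `Φ` is completely positive if it is `k`-positive for every `k`, i.e. the blockwise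
application of `Φ` to `M_k(M_m)` is a positive map for every `k`. -/
def IsCompletelyPositive {m n : ℕ}
    (Φ : Matrix (Fin m) (Fin m) ℂ → Matrix (Fin n) (Fin n) ℂ) : Prop :=
  ∀ k : ℕ, ∀ X : Matrix (Fin k × Fin m) (Fin k × Fin m) ℂ,
    X.PosSemidef → (blockApply k Φ X).PosSemidef

/-- `Φ` is decomposable if it is the sum of a completely positive linear map and a
completely copositive linear map. -/
def IsDecomposable {m n : ℕ}
    (Φ : Matrix (Fin m) (Fin m) ℂ → Matrix (Fin n) (Fin n) ℂ) : Prop :=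
  ∃ Φ₁ Φ₂ : Matrix (Fin m) (Fin m) ℂ → Matrix (Fin n) (Fin n) ℂ,
    IsLinearMap ℂ Φ₁ ∧ IsLinearMap ℂ Φ₂ ∧
    IsCompletelyPositive Φ₁ ∧ IsCompletelyPositive (fun X => (Φ₂ X)ᵀ) ∧
    ∀ X, Φ X = Φ₁ X + Φ₂ X

/-- The Choi matrix of `Φ`: `C_Φ = (Φ(E_{ij}))_{i,j}` as an element of `M_m ⊗ M_n`. -/
def choiMatrix {m n : ℕ} (Φ : Matrix (Fin m) (Fin m) ℂ → Matrix (Fin n) (Fin n) ℂ) :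
    Matrix (Fin m × Fin n) (Fin m × Fin n) ℂ :=
  Matrix.of fun p q => Φ (Matrix.single p.1 q.1 1) p.2 q.2

/-- The simple tensor `ξ ⊗ η` of two vectors. -/
def tensorVec {m n : ℕ} (ξ : Fin m → ℂ) (η : Fin n → ℂ) : Fin m × Fin n → ℂ :=
  fun p => ξ p.1 * η p.2

/-- The partial transposition `(id ⊗ transpose)` on `M_m ⊗ M_n`. -/
def partialTranspose {m n : ℕ} (ρ : Matrix (Fin m × Fin n) (Fin m × Fin n) ℂ) :
    Matrix (Fin m × Fin n) (Fin m × Fin n) ℂ :=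
  Matrix.of fun p q => ρ (p.1, q.2) (q.1, p.2)

/-- The Choi-like map `Φ_A` associated to a matrix `A` of coefficients: the `i`-th diagonal
entry of `Φ_A(X)` is `∑ k, A i k * x_{kk}` and the off-diagonal entries are `-x_{ij}`. -/
def PhiMap {n : ℕ} (A : Matrix (Fin n) (Fin n) ℝ) (X : Matrix (Fin n) (Fin n) ℂ) :
    Matrix (Fin n) (Fin n) ℂ :=
  Matrix.of fun i j => if i = j then ∑ k, (A i k : ℂ) * X k k else -X i j

/-- The generalized Choi map `Φ_{[a,b,c]}` of Cho, Kye and Lee. -/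
def genChoiMap (a b c : ℝ) : Matrix (Fin 3) (Fin 3) ℂ → Matrix (Fin 3) (Fin 3) ℂ :=
  PhiMap !![a, b, c; c, a, b; b, c, a]

/-- Kye's map `Φ_{[a; c₁, c₂, c₃]}`. -/
def kyeMap (a c₁ c₂ c₃ : ℝ) : Matrix (Fin 3) (Fin 3) ℂ → Matrix (Fin 3) (Fin 3) ℂ :=
  PhiMap !![a, 0, c₁; c₂, a, 0; 0, c₃, a]

/-- The diagonal map `Δ_A(X) = diag(∑_j (a_{ij} + δ_{ij}) x_{jj})_i`. -/
def DeltaMap {n : ℕ} (A : Matrix (Fin n) (Fin n) ℝ) (X : Matrix (Fin n) (Fin n) ℂ) :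
    Matrix (Fin n) (Fin n) ℂ :=
  Matrix.diagonal (fun i => ∑ j, ((A i j : ℂ) + if i = j then 1 else 0) * X j j)

/-- The map `Φ_A(X) = Δ_A(X) - X`. -/
def PhiDelta {n : ℕ} (A : Matrix (Fin n) (Fin n) ℝ) (X : Matrix (Fin n) (Fin n) ℂ) :
    Matrix (Fin n) (Fin n) ℂ :=
  DeltaMap A X - X


private lemma diag_re_nonneg' {n : ℕ} {X : Matrix (Fin n) (Fin n) ℂ} (hX : X.PosSemidef)
    (i : Fin n) : 0 ≤ (X i i).re := by
  have h := hX.dotProduct_mulVec_nonneg (Pi.single i 1 : Fin n → ℂ)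
  have e : (star (Pi.single i 1 : Fin n → ℂ) ⬝ᵥ X *ᵥ (Pi.single i 1 : Fin n → ℂ)) = X i i := by
    rw [Matrix.mulVec_single]
    have : star (Pi.single i 1 : Fin n → ℂ) = (Pi.single i 1 : Fin n → ℂ) := by
      funext k
      simp only [Pi.star_apply, Pi.single_apply]
      split_ifs <;> simp
    rw [this, single_dotProduct]
    simp
  rw [e] at h
  exact (Complex.nonneg_iff.mp h).1

private lemma abs_entry_le' {n : ℕ} {X : Matrix (Fin n) (Fin n) ℂ} (hX : X.PosSemidef)
    (i j : Fin n) :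
    ‖X i j‖ ≤ Real.sqrt ((X i i).re) * Real.sqrt ((X j j).re) := by
  rcases eq_or_ne i j with rfl | hij
  · rw [Real.mul_self_sqrt (diag_re_nonneg' hX i)]
    have him : (X i i).im = 0 := Complex.conj_eq_iff_im.mp (hX.1.apply i i)
    have hz : X i i = ((X i i).re : ℂ) := by
      apply Complex.ext <;> simp [him]
    conv_lhs => rw [hz]
    rw [Complex.norm_real, Real.norm_eq_abs, abs_of_nonneg (diag_re_nonneg' hX i)]
  · set c := X i j with hc
    set p := (X i i).re with hp
    set q := (X j j).re with hq
    have hp0 : 0 ≤ p := diag_re_nonneg' hX i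
    have hq0 : 0 ≤ q := diag_re_nonneg' hX j
    have hXii : X i i = (p : ℂ) := (hX.1.coe_re_apply_self i).symm
    have hXjj : X j j = (q : ℂ) := (hX.1.coe_re_apply_self j).symm
    have hXji : X j i = (starRingEnd ℂ) c := by
      rw [hc, ← Complex.star_def]
      exact (hX.1.apply j i).symm
    have key : ∀ t : ℝ, 0 ≤ p * (t * t) + (-(2 * Complex.normSq c)) * t
        + Complex.normSq c * q := by
      intro t
      have h0 := hX.dotProduct_mulVec_nonneg ((Pi.single i (t : ℂ) : Fin n → ℂ) + (Pi.single j (-((starRingEnd ℂ) c)) : Fin n → ℂ))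
      have hval : star ((Pi.single i (t : ℂ) : Fin n → ℂ) + (Pi.single j (-((starRingEnd ℂ) c)) : Fin n → ℂ)) ⬝ᵥ
          X *ᵥ ((Pi.single i (t : ℂ) : Fin n → ℂ) + (Pi.single j (-((starRingEnd ℂ) c)) : Fin n → ℂ))
          = ((p * (t * t) + (-(2 * Complex.normSq c)) * t + Complex.normSq c * q : ℝ) : ℂ) := by
        have hstar : star ((Pi.single i (t : ℂ) : Fin n → ℂ) + (Pi.single j (-((starRingEnd ℂ) c)) : Fin n → ℂ))
            = (Pi.single i ((t : ℂ)) : Fin n → ℂ) + (Pi.single j (-c) : Fin n → ℂ) := by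
          funext k
          simp only [Pi.star_apply, Pi.add_apply, Pi.single_apply]
          split_ifs <;> simp_all
        rw [hstar, Matrix.mulVec_add, Matrix.mulVec_single, Matrix.mulVec_single,
          add_dotProduct, single_dotProduct, single_dotProduct]
        simp only [Pi.add_apply, Pi.smul_apply, op_smul_eq_mul, Matrix.col_apply, hXii, hXjj, hXji]
        have hcc : c * (starRingEnd ℂ) c = (Complex.normSq c : ℂ) := Complex.mul_conj c
        push_cast
        calc (t:ℂ) * ((p:ℂ) * t + c * -((starRingEnd ℂ) c))
              + (-c) * ((starRingEnd ℂ) c * t + (q:ℂ) * -((starRingEnd ℂ) c))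
            = (p:ℂ) * (t * t) + (-(2 * (c * (starRingEnd ℂ) c))) * t
              + (c * (starRingEnd ℂ) c) * q := by ring
          _ = (p:ℂ) * (t * t) + (-(2 * (Complex.normSq c : ℂ))) * t
              + ((Complex.normSq c : ℂ)) * q := by rw [hcc]
      rw [hval] at h0
      have := Complex.zero_le_real.mp h0
      push_cast at this ⊢
      linarith
    have hd := discrim_le_zero key
    rw [discrim] at hd
    have hns : Complex.normSq c * Complex.normSq c ≤ p * q * Complex.normSq c := by nlinarith
    rcases (Complex.normSq_nonneg c).eq_or_lt with h0 | hpos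
    · have : c = 0 := Complex.normSq_eq_zero.mp h0.symm
      rw [hc] at this ⊢
      rw [this]
      simp
      positivity
    · have hle : Complex.normSq c ≤ p * q := le_of_mul_le_mul_right (by nlinarith) hpos
      calc ‖c‖ = Real.sqrt (Complex.normSq c) := Complex.norm_def _
        _ ≤ Real.sqrt (p * q) := Real.sqrt_le_sqrt hle
        _ = Real.sqrt p * Real.sqrt q := Real.sqrt_mul hp0 q


private lemma sum_offdiag_symm' {n : ℕ} (f : Fin n → Fin n → ℝ) :
    ∑ i, ∑ j, (if i = j then 0 else f i j) = ∑ i, ∑ j, (if i = j then 0 else f j i) := by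
  rw [Finset.sum_comm]
  refine Finset.sum_congr rfl fun i _ => Finset.sum_congr rfl fun j _ => ?_
  exact if_congr eq_comm rfl rfl

private lemma sum_offdiag_const' {n : ℕ} (c : Fin n → ℝ) :
    ∑ i, ∑ j, (if i = j then 0 else c i) = ∑ i, ((n : ℝ) - 1) * c i := by
  refine Finset.sum_congr rfl fun i _ => ?_
  have h1 : ∑ j : Fin n, (if i = j then (0:ℝ) else c i)
      = ∑ j : Fin n, (c i - if i = j then c i else 0) := by
    refine Finset.sum_congr rfl fun j _ => ?_
    by_cases h : i = j <;> simp [h]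
  rw [h1, Finset.sum_sub_distrib, Finset.sum_const, Finset.sum_ite_eq]
  simp [Finset.card_univ, nsmul_eq_mul]
  ring

private lemma key_ineq' (n : ℕ) (hn : 2 ≤ n) (A : Matrix (Fin n) (Fin n) ℝ)
    (hA : ∀ i j, 0 ≤ A i j)
    (h : ∀ i j, i ≠ j →
      1 ≤ (1 / ((n : ℝ) - 1)) * Real.sqrt (A i i * A j j) + Real.sqrt (A i j * A j i))
    (r s : Fin n → ℝ) (hr : ∀ i, 0 ≤ r i) (hs : ∀ i, 0 ≤ s i) :
    (∑ i, r i * s i) ^ 2 ≤ ∑ i, (∑ j, (A i j + if i = j then 1 else 0) * r j ^ 2) * s i ^ 2 := by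
  have hm : (0:ℝ) < (n : ℝ) - 1 := by
    have : (2:ℝ) ≤ (n:ℝ) := by exact_mod_cast hn
    linarith
  have hm' : ((n:ℝ) - 1) ≠ 0 := ne_of_gt hm
  set g : Fin n → Fin n → ℝ := fun i j => if i = j then (r i * s i) ^ 2 else
      (1 / (2 * ((n:ℝ) - 1))) * (A i i * (r i * s i) ^ 2)
      + (1 / (2 * ((n:ℝ) - 1))) * (A j j * (r j * s j) ^ 2)
      + A i j * r j ^ 2 * s i ^ 2 / 2 + A j i * r i ^ 2 * s j ^ 2 / 2 with hg
  have step1 : (∑ i, r i * s i) ^ 2 ≤ ∑ i, ∑ j, g i j := by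
    rw [sq, Finset.sum_mul_sum]
    refine Finset.sum_le_sum fun i _ => Finset.sum_le_sum fun j _ => ?_
    rcases eq_or_ne i j with rfl | hij
    · simp [hg, sq]
    · have hP : 0 ≤ (r i * s i) * (r j * s j) :=
        mul_nonneg (mul_nonneg (hr i) (hs i)) (mul_nonneg (hr j) (hs j))
      have c1 : Real.sqrt (A i i * A j j) * ((r i * s i) * (r j * s j))
          ≤ (A i i * (r i * s i) ^ 2 + A j j * (r j * s j) ^ 2) / 2 := by
        calc Real.sqrt (A i i * A j j) * ((r i * s i) * (r j * s j))
            = (Real.sqrt (A i i) * (r i * s i)) * (Real.sqrt (A j j) * (r j * s j)) := by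
              rw [Real.sqrt_mul (hA i i)]; ring
          _ ≤ ((Real.sqrt (A i i) * (r i * s i)) ^ 2 + (Real.sqrt (A j j) * (r j * s j)) ^ 2) / 2 := by
              nlinarith [sq_nonneg (Real.sqrt (A i i) * (r i * s i) - Real.sqrt (A j j) * (r j * s j))]
          _ = (A i i * (r i * s i) ^ 2 + A j j * (r j * s j) ^ 2) / 2 := by
              simp only [mul_pow, Real.sq_sqrt (hA i i), Real.sq_sqrt (hA j j)]
              try ring
      have c2 : Real.sqrt (A i j * A j i) * ((r i * s i) * (r j * s j))
          ≤ (A i j * r j ^ 2 * s i ^ 2 + A j i * r i ^ 2 * s j ^ 2) / 2 := by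
        calc Real.sqrt (A i j * A j i) * ((r i * s i) * (r j * s j))
            = (Real.sqrt (A i j) * (r j * s i)) * (Real.sqrt (A j i) * (r i * s j)) := by
              rw [Real.sqrt_mul (hA i j)]; ring
          _ ≤ ((Real.sqrt (A i j) * (r j * s i)) ^ 2 + (Real.sqrt (A j i) * (r i * s j)) ^ 2) / 2 := by
              nlinarith [sq_nonneg (Real.sqrt (A i j) * (r j * s i) - Real.sqrt (A j i) * (r i * s j))]
          _ = (A i j * r j ^ 2 * s i ^ 2 + A j i * r i ^ 2 * s j ^ 2) / 2 := by
              simp only [mul_pow, Real.sq_sqrt (hA i j), Real.sq_sqrt (hA j i)]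
              try ring
      calc (r i * s i) * (r j * s j) = 1 * ((r i * s i) * (r j * s j)) := (one_mul _).symm
        _ ≤ ((1 / ((n:ℝ) - 1)) * Real.sqrt (A i i * A j j) + Real.sqrt (A i j * A j i))
              * ((r i * s i) * (r j * s j)) :=
            mul_le_mul_of_nonneg_right (h i j hij) hP
        _ = (1 / ((n:ℝ) - 1)) * (Real.sqrt (A i i * A j j) * ((r i * s i) * (r j * s j)))
              + Real.sqrt (A i j * A j i) * ((r i * s i) * (r j * s j)) := by ring
        _ ≤ (1 / ((n:ℝ) - 1)) * ((A i i * (r i * s i) ^ 2 + A j j * (r j * s j) ^ 2) / 2)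
              + (A i j * r j ^ 2 * s i ^ 2 + A j i * r i ^ 2 * s j ^ 2) / 2 :=
            add_le_add (mul_le_mul_of_nonneg_left c1 (by positivity)) c2
        _ = g i j := by
            rw [hg]
            simp only [if_neg hij]
            field_simp
            ring
  have step2 : ∑ i, ∑ j, g i j
      = ∑ i, (∑ j, (A i j + if i = j then 1 else 0) * r j ^ 2) * s i ^ 2 := by
    have hsplit : ∀ i j, g i j =
        (if i = j then (r i * s i) ^ 2 else 0)
        + (if i = j then 0 else (1 / (2 * ((n:ℝ) - 1))) * (A i i * (r i * s i) ^ 2))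
        + (if i = j then 0 else (1 / (2 * ((n:ℝ) - 1))) * (A j j * (r j * s j) ^ 2))
        + (if i = j then 0 else A i j * r j ^ 2 * s i ^ 2 / 2)
        + (if i = j then 0 else A j i * r i ^ 2 * s j ^ 2 / 2) := by
      intro i j; by_cases hij : i = j <;> simp [hg, hij]
    have hRHS : ∀ i j, (A i j + if i = j then (1:ℝ) else 0) * r j ^ 2 * s i ^ 2 =
        (if i = j then (r i * s i) ^ 2 else 0)
        + (if i = j then A i i * (r i * s i) ^ 2 else 0)
        + (if i = j then 0 else A i j * r j ^ 2 * s i ^ 2) := by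
      intro i j; by_cases hij : i = j
      · subst hij; simp; ring
      · simp [hij]
    have e2 : ∑ i, ∑ j, (if i = j then 0 else (1 / (2 * ((n:ℝ) - 1))) * (A j j * (r j * s j) ^ 2))
        = ∑ i, ∑ j, (if i = j then 0 else (1 / (2 * ((n:ℝ) - 1))) * (A i i * (r i * s i) ^ 2)) :=
      sum_offdiag_symm' (fun _ j => (1 / (2 * ((n:ℝ) - 1))) * (A j j * (r j * s j) ^ 2))
    have e4 : ∑ i, ∑ j, (if i = j then 0 else A j i * r i ^ 2 * s j ^ 2 / 2)
        = ∑ i, ∑ j, (if i = j then 0 else A i j * r j ^ 2 * s i ^ 2 / 2) :=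
      sum_offdiag_symm' (fun i j => A j i * r i ^ 2 * s j ^ 2 / 2)
    have e1 : ∑ i, ∑ j, (if i = j then 0 else (1 / (2 * ((n:ℝ) - 1))) * (A i i * (r i * s i) ^ 2))
        = ∑ i, ((n:ℝ) - 1) * ((1 / (2 * ((n:ℝ) - 1))) * (A i i * (r i * s i) ^ 2)) :=
      sum_offdiag_const' _
    calc ∑ i, ∑ j, g i j
        = ∑ i, ∑ j, ((if i = j then (r i * s i) ^ 2 else 0)
          + (if i = j then 0 else (1 / (2 * ((n:ℝ) - 1))) * (A i i * (r i * s i) ^ 2))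
          + (if i = j then 0 else (1 / (2 * ((n:ℝ) - 1))) * (A j j * (r j * s j) ^ 2))
          + (if i = j then 0 else A i j * r j ^ 2 * s i ^ 2 / 2)
          + (if i = j then 0 else A j i * r i ^ 2 * s j ^ 2 / 2)) := by
          exact Finset.sum_congr rfl fun i _ => Finset.sum_congr rfl fun j _ => hsplit i j
      _ = (∑ i, ∑ j, (if i = j then (r i * s i) ^ 2 else 0))
          + (∑ i, ∑ j, (if i = j then 0 else (1 / (2 * ((n:ℝ) - 1))) * (A i i * (r i * s i) ^ 2)))
          + (∑ i, ∑ j, (if i = j then 0 else (1 / (2 * ((n:ℝ) - 1))) * (A j j * (r j * s j) ^ 2)))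
          + (∑ i, ∑ j, (if i = j then 0 else A i j * r j ^ 2 * s i ^ 2 / 2))
          + (∑ i, ∑ j, (if i = j then 0 else A j i * r i ^ 2 * s j ^ 2 / 2)) := by
          simp only [Finset.sum_add_distrib]
      _ = (∑ i, ∑ j, (if i = j then (r i * s i) ^ 2 else 0))
          + (∑ i, ∑ j, (if i = j then A i i * (r i * s i) ^ 2 else 0))
          + (∑ i, ∑ j, (if i = j then 0 else A i j * r j ^ 2 * s i ^ 2)) := by
          rw [e2, e4, e1]
          have hfold : ∀ i : Fin n,
              ((n:ℝ) - 1) * ((1 / (2 * ((n:ℝ) - 1))) * (A i i * (r i * s i) ^ 2))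
              = A i i * (r i * s i) ^ 2 / 2 := by
            intro i; field_simp
          have h2 : ∀ i j : Fin n, (if i = j then (0:ℝ) else A i j * r j ^ 2 * s i ^ 2 / 2)
              = (if i = j then 0 else A i j * r j ^ 2 * s i ^ 2) / 2 := by
            intro i j; split <;> simp
          simp only [hfold, h2, ← Finset.sum_div]
          simp only [Finset.sum_ite_eq, Finset.mem_univ, if_true]
          ring
      _ = ∑ i, ∑ j, ((if i = j then (r i * s i) ^ 2 else 0)
          + (if i = j then A i i * (r i * s i) ^ 2 else 0)
          + (if i = j then 0 else A i j * r j ^ 2 * s i ^ 2)) := by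
          simp only [Finset.sum_add_distrib]
      _ = ∑ i, ∑ j, (A i j + if i = j then (1:ℝ) else 0) * r j ^ 2 * s i ^ 2 := by
          exact Finset.sum_congr rfl fun i _ => Finset.sum_congr rfl fun j _ => (hRHS i j).symm
      _ = ∑ i, (∑ j, (A i j + if i = j then 1 else 0) * r j ^ 2) * s i ^ 2 := by
          refine Finset.sum_congr rfl fun i _ => ?_
          rw [Finset.sum_mul]
  exact step1.trans_eq step2

/-- If `n ≥ 2` and `(1/(n-1))√(a_{ii}a_{jj}) + √(a_{ij}a_{ji}) ≥ 1` for all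
`i ≠ j`, then `Φ_A(X) = Δ_A(X) - X` is positive. -/
theorem phiDelta_pos_of_strengthened_local (n : ℕ) (hn : 2 ≤ n)
    (A : Matrix (Fin n) (Fin n) ℝ) (hA : ∀ i j, 0 ≤ A i j)
    (h : ∀ i j, i ≠ j →
      1 ≤ (1 / ((n : ℝ) - 1)) * Real.sqrt (A i i * A j j) + Real.sqrt (A i j * A j i)) :
    IsPosMap (PhiDelta A) := by
  intro X hX
  have hdiagX : ∀ j, X j j = ((X j j).re : ℂ) := by
    intro j
    have him : (X j j).im = 0 := Complex.conj_eq_iff_im.mp (hX.1.apply j j)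
    apply Complex.ext <;> simp [him]
  have hH : (PhiDelta A X).IsHermitian := by
    unfold PhiDelta DeltaMap
    refine Matrix.IsHermitian.sub ?_ hX.1
    refine Matrix.isHermitian_diagonal_of_self_adjoint _ ?_
    funext i
    simp only [Pi.star_apply]
    rw [star_sum]
    refine Finset.sum_congr rfl fun j _ => ?_
    rw [star_mul']
    rw [show (star (X j j)) = X j j from hX.1.apply j j]
    congr 1
    rw [star_add]
    simp [Complex.star_def, Complex.conj_ofReal, apply_ite (starRingEnd ℂ)]
  refine Matrix.PosSemidef.of_dotProduct_mulVec_nonneg hH fun y => ?_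
  set r : Fin n → ℝ := fun i => Real.sqrt ((X i i).re) with hr
  set s : Fin n → ℝ := fun i => ‖y i‖ with hs
  have hmv : star y ⬝ᵥ (PhiDelta A X *ᵥ y)
      = star y ⬝ᵥ (DeltaMap A X *ᵥ y) - star y ⬝ᵥ (X *ᵥ y) := by
    rw [PhiDelta, Matrix.sub_mulVec, dotProduct_sub]
  have hwD : star y ⬝ᵥ (DeltaMap A X *ᵥ y)
      = ((∑ i, (∑ j, (A i j + if i = j then 1 else 0) * (X j j).re) * Complex.normSq (y i)
          : ℝ) : ℂ) := by
    unfold DeltaMap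
    rw [Complex.ofReal_sum]
    simp only [dotProduct, Matrix.mulVec_diagonal, Pi.star_apply]
    refine Finset.sum_congr rfl fun i _ => ?_
    have hcoef : (∑ j, ((A i j : ℂ) + if i = j then 1 else 0) * X j j)
        = ((∑ j, (A i j + if i = j then 1 else 0) * (X j j).re : ℝ) : ℂ) := by
      rw [Complex.ofReal_sum]
      refine Finset.sum_congr rfl fun j _ => ?_
      rw [hdiagX j]
      push_cast
      congr 1
      split <;> simp
    rw [hcoef]
    rw [show star (y i) * (((∑ j, (A i j + if i = j then 1 else 0) * (X j j).re : ℝ) : ℂ) * y i)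
        = ((∑ j, (A i j + if i = j then 1 else 0) * (X j j).re : ℝ) : ℂ) * (y i * star (y i))
        from by ring]
    rw [Complex.star_def, Complex.mul_conj]
    push_cast
    ring
  have hwX0 := hX.dotProduct_mulVec_nonneg y
  obtain ⟨hre0, him0⟩ := Complex.nonneg_iff.mp hwX0
  have hwX : star y ⬝ᵥ (X *ᵥ y) = (((star y ⬝ᵥ (X *ᵥ y)).re : ℝ) : ℂ) := by
    apply Complex.ext <;> simp [him0.symm]
  have hrX : (star y ⬝ᵥ (X *ᵥ y)).re ≤ (∑ i, r i * s i) ^ 2 := by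
    have hexp : star y ⬝ᵥ (X *ᵥ y) = ∑ i, ∑ j, star (y i) * (X i j * y j) := by
      simp [dotProduct, Matrix.mulVec, Finset.mul_sum]
    rw [hexp]
    rw [Complex.re_sum]
    have : ∀ i : Fin n, (∑ j, star (y i) * (X i j * y j)).re
        = ∑ j, (star (y i) * (X i j * y j)).re := fun i => Complex.re_sum _ _
    simp only [this]
    have hb : ∀ i j : Fin n, (star (y i) * (X i j * y j)).re ≤ (r i * s i) * (r j * s j) := by
      intro i j
      calc (star (y i) * (X i j * y j)).re ≤ ‖star (y i) * (X i j * y j)‖ :=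
            Complex.re_le_norm _
        _ = s i * (‖X i j‖ * s j) := by
            rw [norm_mul, norm_mul, hs]
            simp [Complex.star_def]
        _ ≤ s i * ((r i * r j) * s j) := by
            have h1 : ‖X i j‖ ≤ r i * r j := abs_entry_le' hX i j
            have hs0 : 0 ≤ s i := by rw [hs]; exact norm_nonneg _
            have hs0' : 0 ≤ s j := by rw [hs]; exact norm_nonneg _
            apply mul_le_mul_of_nonneg_left _ hs0
            exact mul_le_mul_of_nonneg_right h1 hs0'
        _ = (r i * s i) * (r j * s j) := by ring
    calc ∑ i, ∑ j, (star (y i) * (X i j * y j)).re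
        ≤ ∑ i, ∑ j, (r i * s i) * (r j * s j) :=
          Finset.sum_le_sum fun i _ => Finset.sum_le_sum fun j _ => hb i j
      _ = (∑ i, r i * s i) ^ 2 := by rw [sq, Finset.sum_mul_sum]
  have hkey := key_ineq' n hn A hA h r s (fun i => Real.sqrt_nonneg _)
      (fun i => norm_nonneg _)
  have hr2 : ∀ j, r j ^ 2 = (X j j).re := fun j => Real.sq_sqrt (diag_re_nonneg' hX j)
  have hs2 : ∀ i, s i ^ 2 = Complex.normSq (y i) := fun i => Complex.sq_norm (y i)
  rw [hmv, hwD, hwX, ← Complex.ofReal_sub, Complex.zero_le_real, sub_nonneg]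
  simp only [hr2, hs2] at hkey
  linarith
end
end

section
/- Let A = (a_{ij}) be a 2×2 real matrix with nonnegative entries. The map Φ_A(X) = Δ_A(X) − X on M_2(ℂ) is positive if and only if √(a_{11}a_{22}) + √(a_{12}a_{21}) ≥ 1. -/
open Matrix
open scoped ComplexOrder

noncomputable section

lemma psd2_of (a b : ℝ) (z : ℂ) (ha : 0 ≤ a) (hb : 0 ≤ b)
    (hz : Complex.normSq z ≤ a * b) :
    (!![(a:ℂ), z; (starRingEnd ℂ) z, (b:ℂ)]).PosSemidef := by
  rw [Matrix.posSemidef_iff_dotProduct_mulVec]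
  constructor
  · ext i j
    fin_cases i <;> fin_cases j <;>
      simp [Matrix.conjTranspose_apply, Complex.conj_ofReal]
  · intro v
    have hexpr : star v ⬝ᵥ (!![(a:ℂ), z; (starRingEnd ℂ) z, (b:ℂ)] *ᵥ v) =
        ((a * Complex.normSq (v 0) + b * Complex.normSq (v 1)
          + 2 * (z * (starRingEnd ℂ) (v 0) * v 1).re : ℝ) : ℂ) := by
      simp only [dotProduct, mulVec, Fin.sum_univ_two, Pi.star_apply,
        Matrix.cons_val', Matrix.cons_val_zero, Matrix.cons_val_one, Matrix.head_cons,
        Matrix.empty_val', Matrix.cons_val_fin_one, Matrix.head_fin_const]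
      apply Complex.ext <;>
        simp [Complex.normSq_apply, Complex.mul_re, Complex.mul_im] <;> ring
    rw [hexpr, Complex.zero_le_real]
    set x := ‖v 0‖ with hxdef
    set y := ‖v 1‖ with hydef
    have hx : Complex.normSq (v 0) = x ^ 2 := by rw [hxdef, Complex.sq_norm]
    have hy : Complex.normSq (v 1) = y ^ 2 := by rw [hydef, Complex.sq_norm]
    rw [hx, hy]
    have habs : ‖z * (starRingEnd ℂ) (v 0) * v 1‖
        = ‖z‖ * x * y := by
      rw [norm_mul, norm_mul, Complex.norm_conj]
    have hwre : -(‖z‖ * x * y) ≤ (z * (starRingEnd ℂ) (v 0) * v 1).re := by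
      have h1 := Complex.abs_re_le_norm (z * (starRingEnd ℂ) (v 0) * v 1)
      rw [habs] at h1
      have h2 := neg_abs_le (z * (starRingEnd ℂ) (v 0) * v 1).re
      linarith
    have hxnn : 0 ≤ x := norm_nonneg _
    have hynn : 0 ≤ y := norm_nonneg _
    have hab : 0 ≤ a * b := mul_nonneg ha hb
    have hzs : ‖z‖ ≤ Real.sqrt (a * b) :=
      Real.le_sqrt_of_sq_le (by rw [Complex.sq_norm]; exact hz)
    have hprod : ‖z‖ * (x * y) ≤ Real.sqrt (a * b) * (x * y) :=
      mul_le_mul_of_nonneg_right hzs (mul_nonneg hxnn hynn)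
    have h2m := two_mul_le_add_sq (Real.sqrt a * x) (Real.sqrt b * y)
    have e1 : (Real.sqrt a * x) ^ 2 = a * x ^ 2 := by
      rw [mul_pow, Real.sq_sqrt ha]
    have e2 : (Real.sqrt b * y) ^ 2 = b * y ^ 2 := by
      rw [mul_pow, Real.sq_sqrt hb]
    have e3 : (Real.sqrt a * x) * (Real.sqrt b * y) = Real.sqrt (a*b) * (x * y) := by
      rw [show (Real.sqrt a * x) * (Real.sqrt b * y)
          = (Real.sqrt a * Real.sqrt b) * (x * y) from by ring,
        ← Real.sqrt_mul ha]
    have hAM : 2 * (Real.sqrt (a*b) * (x*y)) ≤ a * x ^ 2 + b * y ^ 2 := by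
      calc 2 * (Real.sqrt (a*b) * (x*y))
          = 2 * ((Real.sqrt a * x) * (Real.sqrt b * y)) := by rw [e3]
        _ ≤ (Real.sqrt a * x) ^ 2 + (Real.sqrt b * y) ^ 2 := by linarith [h2m]
        _ = a * x ^ 2 + b * y ^ 2 := by rw [e1, e2]
    linarith [hAM, hwre, hprod]

lemma diag_entry_nonneg {M : Matrix (Fin 2) (Fin 2) ℂ} (hM : M.PosSemidef) (i : Fin 2) :
    0 ≤ M i i := by
  have := hM.dotProduct_mulVec_nonneg (Pi.single i 1)
  simpa [dotProduct, mulVec, Fin.sum_univ_two, Pi.single_apply] using this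

lemma diag_entry_real {M : Matrix (Fin 2) (Fin 2) ℂ} (hM : M.PosSemidef) (i : Fin 2) :
    M i i = ((M i i).re : ℂ) := by
  have h := (Complex.le_def.mp (diag_entry_nonneg hM i)).2
  apply Complex.ext
  · simp
  · simpa using h.symm

lemma psd2_det (M : Matrix (Fin 2) (Fin 2) ℂ) (hM : M.PosSemidef) :
    Complex.normSq (M 0 1) ≤ (M 0 0).re * (M 1 1).re := by
  have hdet : 0 ≤ M.det := by
    rw [hM.1.det_eq_prod_eigenvalues]
    have h : (0:ℂ) ≤ ((∏ i, hM.1.eigenvalues i : ℝ) : ℂ) := by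
      rw [Complex.zero_le_real]
      exact Finset.prod_nonneg fun i _ => hM.eigenvalues_nonneg i
    simpa [Complex.ofReal_prod] using h
  have h10 : M 1 0 = (starRingEnd ℂ) (M 0 1) := by
    have h := hM.1.apply 0 1
    rw [← h, RCLike.star_def, Complex.conj_conj]
  rw [Matrix.det_fin_two, h10, diag_entry_real hM 0, diag_entry_real hM 1,
    Complex.mul_conj] at hdet
  rw [← Complex.ofReal_mul, ← Complex.ofReal_sub, Complex.zero_le_real] at hdet
  linarith

lemma one_le_of_one_le_sq {x : ℝ} (hx : 0 ≤ x) (h : 1 ≤ x ^ 2) : 1 ≤ x := by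
  nlinarith

set_option maxHeartbeats 1000000 in
lemma key_ineq (a b c d : ℝ) (ha : 0 ≤ a) (hb : 0 ≤ b) (hc : 0 ≤ c) (hd : 0 ≤ d) :
    (∀ s t : ℝ, 0 ≤ s → 0 ≤ t → s * t ≤ (a*s + b*t) * (c*s + d*t)) ↔
      1 ≤ Real.sqrt (a*d) + Real.sqrt (b*c) := by
  have hadnn : 0 ≤ a * d := mul_nonneg ha hd
  have hbcnn : 0 ≤ b * c := mul_nonneg hb hc
  have hp2 : Real.sqrt (a*d) ^ 2 = a * d := Real.sq_sqrt hadnn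
  have hq2 : Real.sqrt (b*c) ^ 2 = b * c := Real.sq_sqrt hbcnn
  have hpnn : 0 ≤ Real.sqrt (a*d) := Real.sqrt_nonneg _
  have hqnn : 0 ≤ Real.sqrt (b*c) := Real.sqrt_nonneg _
  set p := Real.sqrt (a*d) with hp
  set q := Real.sqrt (b*c) with hq
  constructor
  · intro h
    apply one_le_of_one_le_sq (by linarith)
    by_cases hsum : 1 ≤ a*d + b*c
    · nlinarith [mul_nonneg hpnn hqnn, hp2, hq2]
    · push_neg at hsum
      have hden : (0:ℝ) < 1 - (a*d + b*c) := by linarith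
      have hac : 0 < a * c := by
        rcases lt_or_eq_of_le (mul_nonneg ha hc) with h' | h'
        · exact h'
        · exfalso
          set T := (b*d + 1) / (1 - (a*d + b*c)) with hT
          have hTpos : 0 < T := div_pos (by nlinarith [mul_nonneg hb hd]) hden
          have hle := h T 1 hTpos.le zero_le_one
          have hexp : (a*T + b*1) * (c*T + d*1)
              = (a*c) * T^2 + (a*d + b*c) * T + b*d := by ring
          rw [hexp, ← h'] at hle
          have hTeq : T * (1 - (a*d + b*c)) = b*d + 1 := by
            rw [hT, div_mul_cancel₀ _ hden.ne']
          nlinarith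
      have hbd : 0 < b * d := by
        rcases lt_or_eq_of_le (mul_nonneg hb hd) with h' | h'
        · exact h'
        · exfalso
          set T := (a*c + 1) / (1 - (a*d + b*c)) with hT
          have hTpos : 0 < T := div_pos (by nlinarith [mul_nonneg ha hc]) hden
          have hle := h 1 T zero_le_one hTpos.le
          have hexp : (a*1 + b*T) * (c*1 + d*T)
              = (b*d) * T^2 + (a*d + b*c) * T + a*c := by ring
          rw [hexp, ← h'] at hle
          have hTeq : T * (1 - (a*d + b*c)) = a*c + 1 := by
            rw [hT, div_mul_cancel₀ _ hden.ne']
          nlinarith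
      set u := Real.sqrt (b*d) with hu
      set w := Real.sqrt (a*c) with hw
      have hu2 : u ^ 2 = b * d := Real.sq_sqrt hbd.le
      have hw2 : w ^ 2 = a * c := Real.sq_sqrt hac.le
      have hupos : 0 < u := Real.sqrt_pos.mpr hbd
      have hwpos : 0 < w := Real.sqrt_pos.mpr hac
      have huw : u * w = p * q := by
        rw [hu, hw, hp, hq, ← Real.sqrt_mul hbd.le, ← Real.sqrt_mul hadnn]
        congr 1; ring
      have hkey := h u w hupos.le hwpos.le
      have hexp : (a*u + b*w) * (c*u + d*w)
          = 2*((a*d)*(b*c)) + (a*d + b*c)*(u*w) := by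
        linear_combination (a*c) * hu2 + (b*d) * hw2
      rw [hexp, huw] at hkey
      -- hkey : p*q ≤ 2*((a*d)*(b*c)) + (a*d + b*c)*(p*q)
      have hadbc : (a*d)*(b*c) = (p*q)^2 := by rw [← hp2, ← hq2]; ring
      rw [hadbc, ← hp2, ← hq2] at hkey
      have hpqpos : 0 < p * q := by rw [← huw]; exact mul_pos hupos hwpos
      nlinarith [hkey, hpqpos]
  · intro h s t hs ht
    have hst : 0 ≤ s * t := mul_nonneg hs ht
    have hac2 : Real.sqrt (a*c) ^ 2 = a*c := Real.sq_sqrt (mul_nonneg ha hc)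
    have hbd2 : Real.sqrt (b*d) ^ 2 = b*d := Real.sq_sqrt (mul_nonneg hb hd)
    have h2m := two_mul_le_add_sq (Real.sqrt (a*c) * s) (Real.sqrt (b*d) * t)
    have e1 : (Real.sqrt (a*c) * s) ^ 2 = a*c*s^2 := by rw [mul_pow, hac2]
    have e2 : (Real.sqrt (b*d) * t) ^ 2 = b*d*t^2 := by rw [mul_pow, hbd2]
    have e3 : (Real.sqrt (a*c) * s) * (Real.sqrt (b*d) * t) = (p*q)*(s*t) := by
      rw [show (Real.sqrt (a*c) * s) * (Real.sqrt (b*d) * t)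
          = (Real.sqrt (a*c) * Real.sqrt (b*d)) * (s*t) from by ring,
        ← Real.sqrt_mul (mul_nonneg ha hc), hp, hq,
        ← Real.sqrt_mul hadnn]
      congr 2; ring
    have hAM : 2 * ((p*q)*(s*t)) ≤ a*c*s^2 + b*d*t^2 := by
      calc 2 * ((p*q)*(s*t))
          = 2 * ((Real.sqrt (a*c) * s) * (Real.sqrt (b*d) * t)) := by rw [e3]
        _ ≤ (Real.sqrt (a*c) * s) ^ 2 + (Real.sqrt (b*d) * t) ^ 2 := by linarith [h2m]
        _ = a*c*s^2 + b*d*t^2 := by rw [e1, e2]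
    have hfin : 0 ≤ ((p + q)^2 - 1) * (s*t) := by
      apply mul_nonneg _ hst
      nlinarith [h, hpnn, hqnn]
    have hgoal : (a*s + b*t) * (c*s + d*t)
        = a*c*s^2 + a*d*(s*t) + b*c*(s*t) + b*d*t^2 := by ring
    rw [hgoal]
    have had : a*d*(s*t) = p^2*(s*t) := by rw [hp2]
    have hbc : b*c*(s*t) = q^2*(s*t) := by rw [hq2]
    rw [had, hbc]
    linarith [hAM, hfin]

lemma phiDelta_eq (A : Matrix (Fin 2) (Fin 2) ℝ) (X : Matrix (Fin 2) (Fin 2) ℂ) :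
    PhiDelta A X = !![(A 0 0 : ℂ) * X 0 0 + (A 0 1 : ℂ) * X 1 1, -(X 0 1);
                     -(X 1 0), (A 1 0 : ℂ) * X 0 0 + (A 1 1 : ℂ) * X 1 1] := by
  ext i j
  fin_cases i <;> fin_cases j <;>
    simp [PhiDelta, DeltaMap, Matrix.diagonal_apply, Fin.sum_univ_two,
      Matrix.sub_apply] <;> ring

/-- For `n = 2`, the map `Φ_A(X) = Δ_A(X) - X` is positive iff
`√(a₁₁a₂₂) + √(a₁₂a₂₁) ≥ 1`. -/
theorem phiDelta_two_pos_iff (A : Matrix (Fin 2) (Fin 2) ℝ) (hA : ∀ i j, 0 ≤ A i j) :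
    IsPosMap (PhiDelta A) ↔
      1 ≤ Real.sqrt (A 0 0 * A 1 1) + Real.sqrt (A 0 1 * A 1 0) := by
  have key := key_ineq (A 0 0) (A 0 1) (A 1 0) (A 1 1)
    (hA 0 0) (hA 0 1) (hA 1 0) (hA 1 1)
  rw [← key]
  constructor
  · intro hpos s t hs ht
    have hst : 0 ≤ s * t := mul_nonneg hs ht
    set r := Real.sqrt (s * t) with hr
    set X : Matrix (Fin 2) (Fin 2) ℂ := !![(s:ℂ), (r:ℂ); (r:ℂ), (t:ℂ)] with hX
    have hXpsd : X.PosSemidef := by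
      have h1 := psd2_of s t (r:ℂ) hs ht (by
        rw [Complex.normSq_ofReal, hr, Real.mul_self_sqrt hst])
      rw [hX]
      simpa [Complex.conj_ofReal] using h1
    have hP := hpos X hXpsd
    rw [phiDelta_eq] at hP
    have hdet := psd2_det _ hP
    simp only [Matrix.of_apply, Matrix.cons_val', Matrix.cons_val_zero,
      Matrix.cons_val_one, Matrix.head_cons, Matrix.empty_val',
      Matrix.cons_val_fin_one, Matrix.head_fin_const] at hdet
    have hX00 : X 0 0 = (s:ℂ) := by rw [hX]; simp
    have hX11 : X 1 1 = (t:ℂ) := by rw [hX]; simp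
    have hX01 : X 0 1 = (r:ℂ) := by rw [hX]; simp
    rw [hX00, hX11, hX01] at hdet
    have hn : Complex.normSq (-(r:ℂ)) = s * t := by
      rw [Complex.normSq_neg, Complex.normSq_ofReal, hr, Real.mul_self_sqrt hst]
    rw [hn] at hdet
    have hre0 : ((A 0 0 : ℂ) * (s:ℂ) + (A 0 1 : ℂ) * (t:ℂ)).re
        = A 0 0 * s + A 0 1 * t := by
      push_cast
      simp [Complex.add_re, Complex.mul_re]
    have hre1 : ((A 1 0 : ℂ) * (s:ℂ) + (A 1 1 : ℂ) * (t:ℂ)).re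
        = A 1 0 * s + A 1 1 * t := by
      push_cast
      simp [Complex.add_re, Complex.mul_re]
    rw [hre0, hre1] at hdet
    exact hdet
  · intro h X hXpsd
    set r0 := (X 0 0).re with hr0def
    set r1 := (X 1 1).re with hr1def
    have hr0 : 0 ≤ r0 := (Complex.le_def.mp (diag_entry_nonneg hXpsd 0)).1
    have hr1 : 0 ≤ r1 := (Complex.le_def.mp (diag_entry_nonneg hXpsd 1)).1
    have h00 : X 0 0 = (r0 : ℂ) := diag_entry_real hXpsd 0
    have h11 : X 1 1 = (r1 : ℂ) := diag_entry_real hXpsd 1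
    have h10 : X 1 0 = (starRingEnd ℂ) (X 0 1) := by
      have hh := hXpsd.1.apply 0 1
      rw [← hh, RCLike.star_def, Complex.conj_conj]
    have hns : Complex.normSq (X 0 1) ≤ r0 * r1 := psd2_det X hXpsd
    have hstep : r0 * r1 ≤ (A 0 0 * r0 + A 0 1 * r1) * (A 1 0 * r0 + A 1 1 * r1) :=
      h r0 r1 hr0 hr1
    have hα : 0 ≤ A 0 0 * r0 + A 0 1 * r1 :=
      add_nonneg (mul_nonneg (hA 0 0) hr0) (mul_nonneg (hA 0 1) hr1)
    have hβ : 0 ≤ A 1 0 * r0 + A 1 1 * r1 :=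
      add_nonneg (mul_nonneg (hA 1 0) hr0) (mul_nonneg (hA 1 1) hr1)
    have hz : Complex.normSq (-(X 0 1))
        ≤ (A 0 0 * r0 + A 0 1 * r1) * (A 1 0 * r0 + A 1 1 * r1) := by
      rw [Complex.normSq_neg]; linarith
    have hpsd := psd2_of (A 0 0 * r0 + A 0 1 * r1) (A 1 0 * r0 + A 1 1 * r1)
      (-(X 0 1)) hα hβ hz
    rw [phiDelta_eq]
    have heq : !![(A 0 0 : ℂ) * X 0 0 + (A 0 1 : ℂ) * X 1 1, -(X 0 1);
                  -(X 1 0), (A 1 0 : ℂ) * X 0 0 + (A 1 1 : ℂ) * X 1 1]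
        = !![((A 0 0 * r0 + A 0 1 * r1 : ℝ) : ℂ), -(X 0 1);
             (starRingEnd ℂ) (-(X 0 1)), ((A 1 0 * r0 + A 1 1 * r1 : ℝ) : ℂ)] := by
      ext i j
      fin_cases i <;> fin_cases j <;>
        simp [h00, h11, h10, map_neg] <;> push_cast <;> ring
    rw [heq]
    exact hpsd
end
end

section
/- Let a_1, a_2, a_3 ≥ 1 and b, c > 0, and let A be the 3×3 matrix with rows (a_1,b,c), (c,a_2,b), (b,c,a_3). If the map Φ_A is positive, then (a_1a_2a_3)^{1/3} + b + c ≥ 2. -/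
open Matrix
open scoped ComplexOrder

noncomputable section

/-- For `a₁, a₂, a₃ ≥ 1`, `b, c > 0` and `A` with rows `(a₁,b,c)`,
`(c,a₂,b)`, `(b,c,a₃)`: if `Φ_A` is positive then `(a₁a₂a₃)^{1/3} + b + c ≥ 2`. -/
theorem phiMap_pos_implies_geom_mean_bc (a₁ a₂ a₃ b c : ℝ)
    (ha₁ : 1 ≤ a₁) (ha₂ : 1 ≤ a₂) (ha₃ : 1 ≤ a₃) (hb : 0 < b) (hc : 0 < c)
    (hpos : IsPosMap (PhiMap !![a₁, b, c; c, a₂, b; b, c, a₃])) :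
    2 ≤ (a₁ * a₂ * a₃) ^ ((1 : ℝ) / 3) + b + c := by
  have key : ∀ x : Fin 3 → ℝ,
      0 ≤ (a₁*x 0^2 + b*x 1^2 + c*x 2^2)*x 0^2
        + (c*x 0^2 + a₂*x 1^2 + b*x 2^2)*x 1^2
        + (b*x 0^2 + c*x 1^2 + a₃*x 2^2)*x 2^2
        - 2*(x 0^2*x 1^2 + x 1^2*x 2^2 + x 0^2*x 2^2) := by
    intro x
    set B : Matrix (Fin 1) (Fin 3) ℂ := Matrix.of fun _ j => (x j : ℂ) with hB
    have hX : (Bᴴ * B).PosSemidef := posSemidef_conjTranspose_mul_self B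
    have h := (hpos _ hX).dotProduct_mulVec_nonneg (fun j => (x j : ℂ))
    rw [← Complex.zero_le_real]
    convert h using 1
    simp [PhiMap, dotProduct, mulVec, Matrix.mul_apply, hB, Fin.sum_univ_three,
      Fin.sum_univ_one, Matrix.conjTranspose_apply]
    ring
  have h10 : (0:ℝ) < a₁ := by linarith
  have h20 : (0:ℝ) < a₂ := by linarith
  have h30 : (0:ℝ) < a₃ := by linarith
  set u := Real.sqrt a₁ with hu
  set v := Real.sqrt a₂ with hv
  set w := Real.sqrt a₃ with hw
  have hu2 : u^2 = a₁ := Real.sq_sqrt h10.le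
  have hv2 : v^2 = a₂ := Real.sq_sqrt h20.le
  have hw2 : w^2 = a₃ := Real.sq_sqrt h30.le
  have hupos : 0 < u := Real.sqrt_pos.2 h10
  have hvpos : 0 < v := Real.sqrt_pos.2 h20
  have hwpos : 0 < w := Real.sqrt_pos.2 h30
  have hkey := key ![Real.sqrt (v*w), Real.sqrt (u*w), Real.sqrt (u*v)]
  simp only [Matrix.cons_val_zero, Matrix.cons_val_one, Matrix.head_cons,
    Matrix.cons_val_two, Matrix.tail_cons] at hkey
  rw [Real.sq_sqrt (by positivity : (0:ℝ) ≤ v*w), Real.sq_sqrt (by positivity : (0:ℝ) ≤ u*w),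
    Real.sq_sqrt (by positivity : (0:ℝ) ≤ u*v), ← hu2, ← hv2, ← hw2] at hkey
  have huvw : 0 < u*v*w := by positivity
  have hmain : 2*(u+v+w) ≤ 3*(u*v*w) + (b+c)*(u+v+w) := by
    by_contra hcon
    push_neg at hcon
    have hEneg : 3*(u*v*w) + (b+c)*(u+v+w) - 2*(u+v+w) < 0 := by linarith
    have := mul_neg_of_pos_of_neg huvw hEneg
    have hident : (u*v*w) * (3*(u*v*w) + (b+c)*(u+v+w) - 2*(u+v+w))
        = (u^2*(v*w) + b*(u*w) + c*(u*v))*(v*w)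
        + (c*(v*w) + v^2*(u*w) + b*(u*v))*(u*w)
        + (b*(v*w) + c*(u*w) + w^2*(u*v))*(u*v)
        - 2*((v*w)*(u*w) + (u*w)*(u*v) + (v*w)*(u*v)) := by ring
    rw [hident] at this
    linarith
  set m := (a₁ * a₂ * a₃) ^ ((1:ℝ)/6) with hm
  have hP : (0:ℝ) < a₁ * a₂ * a₃ := by positivity
  have hmpos : 0 < m := Real.rpow_pos_of_pos hP _
  have hm3 : m^3 = u*v*w := by
    have h1 : m^3 = (a₁ * a₂ * a₃) ^ ((1:ℝ)/2) := by
      rw [hm, ← Real.rpow_natCast ((a₁ * a₂ * a₃) ^ ((1:ℝ)/6)) 3,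
        ← Real.rpow_mul hP.le]
      norm_num
    rw [h1, Real.rpow_div_two_eq_sqrt _ hP.le, hu, hv, hw, ← Real.sqrt_mul h10.le,
      ← Real.sqrt_mul (by positivity)]
    norm_num
  have hm2 : (a₁ * a₂ * a₃) ^ ((1:ℝ)/3) = m^2 := by
    rw [hm, ← Real.rpow_natCast ((a₁ * a₂ * a₃) ^ ((1:ℝ)/6)) 2, ← Real.rpow_mul hP.le]
    norm_num
  have hAMGM : 3*m ≤ u+v+w := by
    have hg := Real.geom_mean_le_arith_mean3_weighted (by norm_num : (0:ℝ) ≤ 1/3)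
      (by norm_num : (0:ℝ) ≤ 1/3) (by norm_num : (0:ℝ) ≤ 1/3)
      hupos.le hvpos.le hwpos.le (by norm_num)
    have hprod : u ^ ((1:ℝ)/3) * v ^ ((1:ℝ)/3) * w ^ ((1:ℝ)/3) = m := by
      rw [hu, hv, hw, Real.sqrt_eq_rpow, Real.sqrt_eq_rpow, Real.sqrt_eq_rpow,
        ← Real.rpow_mul h10.le, ← Real.rpow_mul h20.le, ← Real.rpow_mul h30.le,
        hm, ← Real.mul_rpow h10.le h20.le, ← Real.mul_rpow (by positivity) h30.le]
      norm_num
    rw [hprod] at hg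
    linarith
  rw [hm2]
  rcases le_or_gt 2 (b+c) with h | h
  · nlinarith [sq_nonneg m]
  · have h1 : (2-(b+c))*(u+v+w) ≤ 3*m^3 := by rw [hm3]; linarith
    have h2 : (2-(b+c))*(3*m) ≤ (2-(b+c))*(u+v+w) :=
      mul_le_mul_of_nonneg_left hAMGM (by linarith)
    nlinarith [hmpos]
end
end

section
/- Let a_1, a_2, a_3 ≥ 1 and b_1, b_2, b_3 > 0, and let A be the 3×3 matrix with rows (a_1,b_1,0), (0,a_2,b_2), (b_3,0,a_3). If the map Φ_A is positive, then (a_1a_2a_3)^{1/3} + (b_1b_2b_3)^{1/3} ≥ 2. -/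
open Matrix
open scoped ComplexOrder

noncomputable section

/-- Auxiliary: elementary algebraic inequality. -/
lemma aux_final_ineq (u1 u2 u3 : ℝ) (h : 1 < u1+u2+u3) :
    (u1-u1^2)+(u2-u2^2)+(u3-u3^2) - 2*(u1*u2+u1*u3+u2*u3) < 0 := by
  nlinarith [sq_nonneg (u1+u2+u3)]

/-- Auxiliary: two-variable convexity-type inequality for `x ↦ 1/(x+1)` in geometric means. -/
lemma aux_two_var (x y m : ℝ) (hx : 1 ≤ x) (hy : 1 ≤ y) (hm0 : 0 ≤ m) (hm : m^2 = x*y) :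
    2/(m+1) ≤ 1/(x+1) + 1/(y+1) := by
  have hm1 : 1 ≤ m := by nlinarith
  have hxy : 2*m ≤ x + y := by nlinarith [sq_nonneg (x - y), sq_nonneg (x + y - 2*m)]
  have hx1 : (0:ℝ) < x + 1 := by linarith
  have hy1 : (0:ℝ) < y + 1 := by linarith
  have hm2 : (0:ℝ) < m + 1 := by linarith
  rw [div_add_div _ _ (ne_of_gt hx1) (ne_of_gt hy1), div_le_div_iff₀ hm2 (by positivity)]
  nlinarith [mul_nonneg (sub_nonneg.2 hm1) (sub_nonneg.2 hxy)]

/-- Auxiliary: three-variable version via the mixing trick. -/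
lemma aux_gm_sum (c1 c2 c3 g : ℝ) (h1 : 1 ≤ c1) (h2 : 1 ≤ c2) (h3 : 1 ≤ c3) (hg : 1 ≤ g)
    (hprod : c1*c2*c3 = g^3) :
    3/(g+1) ≤ 1/(c1+1) + 1/(c2+1) + 1/(c3+1) := by
  set m := Real.sqrt (c1*c2) with hmdef
  set n := Real.sqrt (c3*g) with hndef
  have hm0 : 0 ≤ m := Real.sqrt_nonneg _
  have hn0 : 0 ≤ n := Real.sqrt_nonneg _
  have hmsq : m^2 = c1*c2 := Real.sq_sqrt (by nlinarith)
  have hnsq : n^2 = c3*g := Real.sq_sqrt (by nlinarith)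
  have hm1 : 1 ≤ m := by nlinarith
  have hn1 : 1 ≤ n := by nlinarith
  have hgsq : g^2 = m*n := by
    have h4 : (g^2)^2 = (m*n)^2 := by rw [mul_pow, hmsq, hnsq]; nlinarith
    exact (pow_left_inj₀ (by positivity) (by positivity) (by norm_num)).mp h4
  have i1 := aux_two_var c1 c2 m h1 h2 hm0 hmsq
  have i2 := aux_two_var c3 g n h3 hg hn0 hnsq
  have i3 := aux_two_var m n g hm1 hn1 (by linarith) hgsq
  have hg1 : (0:ℝ) < g + 1 := by linarith
  have step : 2/(g+1) + 2/(g+1) ≤ 2/(m+1) + 2/(n+1) := by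
    have e : 2/(m+1) + 2/(n+1) = 2*(1/(m+1) + 1/(n+1)) := by ring
    have e2 : 2/(g+1) + 2/(g+1) = 2*(2/(g+1)) := by ring
    rw [e, e2]
    linarith
  have final : 3/(g+1) + 1/(g+1) ≤ 1/(c1+1) + 1/(c2+1) + 1/(c3+1) + 1/(g+1) := by
    have e : (3:ℝ)/(g+1) + 1/(g+1) = 2/(g+1) + 2/(g+1) := by ring
    rw [e]
    linarith
  linarith

/-- Auxiliary: construction of a negative quadratic-form value (abstract cube roots). -/
lemma aux_real_side' (a₁ a₂ a₃ b₁ b₂ b₃ α β : ℝ)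
    (ha₁ : 1 ≤ a₁) (ha₂ : 1 ≤ a₂) (ha₃ : 1 ≤ a₃)
    (hb₁ : 0 < b₁) (hb₂ : 0 < b₂) (hb₃ : 0 < b₃)
    (hα0 : 0 < α) (hβ0 : 0 < β) (hα1 : 1 ≤ α)
    (hα3 : α ^ 3 = a₁ * a₂ * a₃) (hβ3 : β ^ 3 = b₁ * b₂ * b₃)
    (hlt : α + β < 2) :
    ∃ t₁ t₂ t₃ v₁ v₂ v₃ : ℝ, 0 < t₁ ∧ 0 < t₂ ∧ 0 < t₃ ∧
      v₁^2*(a₁*t₁^2+b₁*t₂^2) + v₂^2*(a₂*t₂^2+b₂*t₃^2) + v₃^2*(b₃*t₁^2+a₃*t₃^2)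
        - 2*(v₁*v₂*t₁*t₂ + v₁*v₃*t₁*t₃ + v₂*v₃*t₂*t₃) < 0 := by
  set c₁ := (α+β)*a₁/α with hc1
  set c₂ := (α+β)*a₂/α with hc2
  set c₃ := (α+β)*a₃/α with hc3
  have hc1' : 1 ≤ c₁ := by rw [hc1, le_div_iff₀ hα0]; nlinarith
  have hc2' : 1 ≤ c₂ := by rw [hc2, le_div_iff₀ hα0]; nlinarith
  have hc3' : 1 ≤ c₃ := by rw [hc3, le_div_iff₀ hα0]; nlinarith
  have hg1 : 1 ≤ α + β := by linarith
  have hprod : c₁*c₂*c₃ = (α+β)^3 := by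
    rw [hc1, hc2, hc3]; field_simp; linear_combination -hα3
  set u₁ := 1/(c₁+1) with hu1
  set u₂ := 1/(c₂+1) with hu2
  set u₃ := 1/(c₃+1) with hu3
  have hS : 1 < u₁ + u₂ + u₃ := by
    have h := aux_gm_sum c₁ c₂ c₃ (α+β) hc1' hc2' hc3' hg1 hprod
    have : 1 < 3/(α+β+1) := by rw [lt_div_iff₀ (by linarith)]; linarith
    linarith
  set s₁ := β*a₁/(α*b₁) with hs1
  set s₂ := β*a₂/(α*b₂) with hs2
  have hs1p : 0 < s₁ := by rw [hs1]; positivity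
  have hs2p : 0 < s₂ := by rw [hs2]; positivity
  have hS3 : b₃ = s₁*s₂*(β*a₃/α) := by
    rw [hs1, hs2]; field_simp
    linear_combination (b₁*b₂*b₃) * hα3 - (a₁*a₂*a₃) * hβ3
  refine ⟨1, Real.sqrt s₁, Real.sqrt (s₁*s₂), u₁, u₂/Real.sqrt s₁, u₃/Real.sqrt (s₁*s₂),
    one_pos, Real.sqrt_pos.2 hs1p, Real.sqrt_pos.2 (by positivity), ?_⟩
  have ht2 : Real.sqrt s₁ ^ 2 = s₁ := Real.sq_sqrt hs1p.le
  have ht3 : Real.sqrt (s₁*s₂) ^ 2 = s₁*s₂ := Real.sq_sqrt (by positivity)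
  have ht2n : Real.sqrt s₁ ≠ 0 := (Real.sqrt_pos.2 hs1p).ne'
  have ht3n : Real.sqrt (s₁*s₂) ≠ 0 := (Real.sqrt_pos.2 (by positivity)).ne'
  have e1 : u₁^2*(a₁*1^2+b₁*(Real.sqrt s₁)^2) = u₁^2*c₁ := by
    rw [ht2, hs1, hc1]; field_simp
  have e2 : (u₂/Real.sqrt s₁)^2*(a₂*(Real.sqrt s₁)^2+b₂*(Real.sqrt (s₁*s₂))^2) = u₂^2*c₂ := by
    rw [div_pow, ht2, ht3, hs1, hs2, hc2]; field_simp
  have e3 : (u₃/Real.sqrt (s₁*s₂))^2*(b₃*1^2+a₃*(Real.sqrt (s₁*s₂))^2) = u₃^2*c₃ := by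
    rw [div_pow, ht3, one_pow, mul_one, hS3, hc3]
    have hsn : s₁*s₂ ≠ 0 := by positivity
    field_simp
    ring
  have f12 : u₁*(u₂/Real.sqrt s₁)*1*(Real.sqrt s₁) = u₁*u₂ := by field_simp
  have f13 : u₁*(u₃/Real.sqrt (s₁*s₂))*1*(Real.sqrt (s₁*s₂)) = u₁*u₃ := by field_simp
  have f23 : (u₂/Real.sqrt s₁)*(u₃/Real.sqrt (s₁*s₂))*(Real.sqrt s₁)*(Real.sqrt (s₁*s₂)) = u₂*u₃ := by
    field_simp
  rw [e1, e2, e3, f12, f13, f23]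
  have hc1n : c₁ + 1 ≠ 0 := by linarith
  have hc2n : c₂ + 1 ≠ 0 := by linarith
  have hc3n : c₃ + 1 ≠ 0 := by linarith
  have g1 : u₁^2*c₁ = u₁ - u₁^2 := by rw [hu1]; field_simp; ring
  have g2 : u₂^2*c₂ = u₂ - u₂^2 := by rw [hu2]; field_simp; ring
  have g3 : u₃^2*c₃ = u₃ - u₃^2 := by rw [hu3]; field_simp; ring
  rw [g1, g2, g3]
  have := aux_final_ineq u₁ u₂ u₃ hS
  linarith

/-- Auxiliary: the real-variable counterexample construction. -/
lemma aux_real_side (a₁ a₂ a₃ b₁ b₂ b₃ : ℝ)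
    (ha₁ : 1 ≤ a₁) (ha₂ : 1 ≤ a₂) (ha₃ : 1 ≤ a₃)
    (hb₁ : 0 < b₁) (hb₂ : 0 < b₂) (hb₃ : 0 < b₃)
    (hlt : (a₁ * a₂ * a₃) ^ ((1 : ℝ) / 3) + (b₁ * b₂ * b₃) ^ ((1 : ℝ) / 3) < 2) :
    ∃ t₁ t₂ t₃ v₁ v₂ v₃ : ℝ, 0 < t₁ ∧ 0 < t₂ ∧ 0 < t₃ ∧
      v₁^2*(a₁*t₁^2+b₁*t₂^2) + v₂^2*(a₂*t₂^2+b₂*t₃^2) + v₃^2*(b₃*t₁^2+a₃*t₃^2)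
        - 2*(v₁*v₂*t₁*t₂ + v₁*v₃*t₁*t₃ + v₂*v₃*t₂*t₃) < 0 := by
  have ha₁' : (0:ℝ) < a₁ := by linarith
  have ha₂' : (0:ℝ) < a₂ := by linarith
  have ha₃' : (0:ℝ) < a₃ := by linarith
  have hP : (0:ℝ) < a₁ * a₂ * a₃ := by positivity
  have hP1 : (1:ℝ) ≤ a₁ * a₂ * a₃ := by
    nlinarith [mul_le_mul ha₁ ha₂ zero_le_one ha₁'.le]
  have hQ : (0:ℝ) < b₁ * b₂ * b₃ := by positivity
  have hα0 : 0 < (a₁ * a₂ * a₃) ^ ((1 : ℝ) / 3) := Real.rpow_pos_of_pos hP _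
  have hβ0 : 0 < (b₁ * b₂ * b₃) ^ ((1 : ℝ) / 3) := Real.rpow_pos_of_pos hQ _
  have hα1 : 1 ≤ (a₁ * a₂ * a₃) ^ ((1 : ℝ) / 3) := Real.one_le_rpow hP1 (by norm_num)
  have hα3 : ((a₁ * a₂ * a₃) ^ ((1 : ℝ) / 3)) ^ 3 = a₁ * a₂ * a₃ := by
    rw [← Real.rpow_natCast (_ ^ _) 3, ← Real.rpow_mul hP.le]; norm_num
  have hβ3 : ((b₁ * b₂ * b₃) ^ ((1 : ℝ) / 3)) ^ 3 = b₁ * b₂ * b₃ := by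
    rw [← Real.rpow_natCast (_ ^ _) 3, ← Real.rpow_mul hQ.le]; norm_num
  exact aux_real_side' a₁ a₂ a₃ b₁ b₂ b₃ _ _ ha₁ ha₂ ha₃ hb₁ hb₂ hb₃ hα0 hβ0 hα1 hα3 hβ3 hlt

/-- Auxiliary: rank-one matrices with real entries are positive semidefinite. -/
lemma aux_rankone_psd (t : Fin 3 → ℝ) :
    (Matrix.of fun i j => ((t i : ℂ)) * (t j : ℂ) : Matrix (Fin 3) (Fin 3) ℂ).PosSemidef := by
  refine Matrix.PosSemidef.of_dotProduct_mulVec_nonneg ?_ ?_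
  · ext i j
    simp [Matrix.conjTranspose_apply, Complex.conj_ofReal, mul_comm]
  · intro x
    have : (star x) ⬝ᵥ ((Matrix.of fun i j => ((t i : ℂ)) * (t j : ℂ) : Matrix (Fin 3) (Fin 3) ℂ) *ᵥ x)
        = star (∑ i, (t i : ℂ) * x i) * (∑ i, (t i : ℂ) * x i) := by
      simp [dotProduct, Matrix.mulVec, Fin.sum_univ_three, Complex.conj_ofReal]
      ring
    rw [this]
    exact star_mul_self_nonneg _

/-- Auxiliary: extracting the real quadratic-form inequality from positive semidefiniteness. -/
lemma aux_extract (a₁ a₂ a₃ b₁ b₂ b₃ : ℝ) (t v : Fin 3 → ℝ)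
    (h : ((PhiMap !![a₁, b₁, 0; 0, a₂, b₂; b₃, 0, a₃]
        (Matrix.of fun i j => ((t i : ℂ)) * (t j : ℂ))).PosSemidef)) :
    0 ≤ (v 0)^2*(a₁*(t 0)^2+b₁*(t 1)^2) + (v 1)^2*(a₂*(t 1)^2+b₂*(t 2)^2)
      + (v 2)^2*(b₃*(t 0)^2+a₃*(t 2)^2)
      - 2*((v 0)*(v 1)*(t 0)*(t 1) + (v 0)*(v 2)*(t 0)*(t 2) + (v 1)*(v 2)*(t 1)*(t 2)) := by
  have h0 := h.dotProduct_mulVec_nonneg (fun i => (v i : ℂ))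
  have key : (star (fun i => (v i : ℂ))) ⬝ᵥ ((PhiMap !![a₁, b₁, 0; 0, a₂, b₂; b₃, 0, a₃]
        (Matrix.of fun i j => ((t i : ℂ)) * (t j : ℂ))) *ᵥ (fun i => (v i : ℂ)))
      = (((v 0)^2*(a₁*(t 0)^2+b₁*(t 1)^2) + (v 1)^2*(a₂*(t 1)^2+b₂*(t 2)^2)
      + (v 2)^2*(b₃*(t 0)^2+a₃*(t 2)^2)
      - 2*((v 0)*(v 1)*(t 0)*(t 1) + (v 0)*(v 2)*(t 0)*(t 2) + (v 1)*(v 2)*(t 1)*(t 2)) : ℝ) : ℂ) := by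
    simp [PhiMap, dotProduct, Matrix.mulVec, Fin.sum_univ_three, Complex.conj_ofReal]
    ring
  rw [key] at h0
  exact_mod_cast h0

/-- For `a₁, a₂, a₃ ≥ 1`, `b₁, b₂, b₃ > 0` and `A` with rows `(a₁,b₁,0)`,
`(0,a₂,b₂)`, `(b₃,0,a₃)`: if `Φ_A` is positive then `(a₁a₂a₃)^{1/3} + (b₁b₂b₃)^{1/3} ≥ 2`. -/
theorem phiMap_pos_implies_geom_means (a₁ a₂ a₃ b₁ b₂ b₃ : ℝ)
    (ha₁ : 1 ≤ a₁) (ha₂ : 1 ≤ a₂) (ha₃ : 1 ≤ a₃)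
    (hb₁ : 0 < b₁) (hb₂ : 0 < b₂) (hb₃ : 0 < b₃)
    (hpos : IsPosMap (PhiMap !![a₁, b₁, 0; 0, a₂, b₂; b₃, 0, a₃])) :
    2 ≤ (a₁ * a₂ * a₃) ^ ((1 : ℝ) / 3) + (b₁ * b₂ * b₃) ^ ((1 : ℝ) / 3) := by
  by_contra hcon
  push_neg at hcon
  obtain ⟨t₁, t₂, t₃, v₁, v₂, v₃, ht₁, ht₂, ht₃, hneg⟩ :=
    aux_real_side a₁ a₂ a₃ b₁ b₂ b₃ ha₁ ha₂ ha₃ hb₁ hb₂ hb₃ hcon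
  set t : Fin 3 → ℝ := ![t₁, t₂, t₃] with htdef
  set v : Fin 3 → ℝ := ![v₁, v₂, v₃] with hvdef
  have hX := hpos _ (aux_rankone_psd t)
  have hquad := aux_extract a₁ a₂ a₃ b₁ b₂ b₃ t v hX
  simp only [htdef, hvdef, Matrix.cons_val_zero, Matrix.cons_val_one, Matrix.head_cons,
    Matrix.cons_val_two, Matrix.tail_cons] at hquad
  linarith
end
end

section
/- Let A be the 3×3 matrix with rows (1/2, 1, 0), (0, 1, 1), (1, 0, 2). Then the map Φ_A is not positive; in particular, for the positive semidefinite rank-one matrix X with entries X_{11}=2^{2/3}, X_{12}=X_{13}=X_{21}=X_{31}=2^{1/6}, X_{22}=X_{23}=X_{32}=X_{33}=2^{-1/3}, the matrix Φ_A(X) has determinant −1 and hence is not positive semidefinite. -/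
open Matrix
open scoped ComplexOrder

noncomputable section

/-- The positive semidefinite rank-one matrix `X` from the counterexample. -/
def exampleX : Matrix (Fin 3) (Fin 3) ℂ :=
  !![(((2 : ℝ) ^ ((2 : ℝ) / 3) : ℝ) : ℂ), (((2 : ℝ) ^ ((1 : ℝ) / 6) : ℝ) : ℂ),
       (((2 : ℝ) ^ ((1 : ℝ) / 6) : ℝ) : ℂ);
     (((2 : ℝ) ^ ((1 : ℝ) / 6) : ℝ) : ℂ), (((2 : ℝ) ^ (-(1 : ℝ) / 3) : ℝ) : ℂ),
       (((2 : ℝ) ^ (-(1 : ℝ) / 3) : ℝ) : ℂ);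
     (((2 : ℝ) ^ ((1 : ℝ) / 6) : ℝ) : ℂ), (((2 : ℝ) ^ (-(1 : ℝ) / 3) : ℝ) : ℂ),
       (((2 : ℝ) ^ (-(1 : ℝ) / 3) : ℝ) : ℂ)]

def myB : Matrix (Fin 1) (Fin 3) ℂ :=
  !![(((2:ℝ)^((1:ℝ)/3) : ℝ) : ℂ), (((2:ℝ)^(-(1:ℝ)/6) : ℝ) : ℂ), (((2:ℝ)^(-(1:ℝ)/6) : ℝ) : ℂ)]

lemma hBX : exampleX = myBᴴ * myB := by
  ext i j
  fin_cases i <;> fin_cases j <;>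
    simp [exampleX, myB, Matrix.mul_apply, Fin.sum_univ_succ, Matrix.vecHead, Matrix.vecTail] <;>
    norm_cast <;> rw [← Real.rpow_add two_pos] <;> congr 1 <;> push_cast <;> ring

lemma hPSD : exampleX.PosSemidef := hBX ▸ Matrix.posSemidef_conjTranspose_mul_self myB

lemma hrank : exampleX.rank = 1 := by
  rw [hBX, Matrix.rank_conjTranspose_mul_self]
  have h1 : myB.rank ≤ 1 := by simpa using Matrix.rank_le_card_height myB
  have h0 : 0 < myB.rank := by
    rw [Matrix.rank]
    have hx : myB.mulVecLin (Pi.single 0 1) ≠ 0 := by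
      intro h
      have := congrFun h 0
      simp [Matrix.mulVecLin_apply, Matrix.mulVec_single, myB] at this
    rw [Module.finrank_pos_iff]
    refine nontrivial_of_ne ⟨_, LinearMap.mem_range_self _ (Pi.single 0 1)⟩ 0 ?_
    simpa [Subtype.ext_iff] using hx
  omega

lemma hdet : (PhiMap !![1/2, 1, 0; 0, 1, 1; 1, 0, 2] exampleX).det = -1 := by
  have ha6 : ((2:ℝ)^((1:ℝ)/6))^6 = 2 := by
    rw [← Real.rpow_natCast ((2:ℝ)^((1:ℝ)/6)) 6, ← Real.rpow_mul (by norm_num)]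
    norm_num
  have h1 : (2:ℝ)^((2:ℝ)/3) = ((2:ℝ)^((1:ℝ)/6))^4 := by
    rw [← Real.rpow_natCast ((2:ℝ)^((1:ℝ)/6)) 4, ← Real.rpow_mul (by norm_num)]
    norm_num
  have h2 : (2:ℝ)^(-(1:ℝ)/3) = ((2:ℝ)^((1:ℝ)/6))^4 / 2 := by
    rw [← Real.rpow_natCast ((2:ℝ)^((1:ℝ)/6)) 4, ← Real.rpow_mul (by norm_num),
      eq_div_iff (two_ne_zero), ← Real.rpow_one 2, ← Real.rpow_mul (by norm_num),
      ← Real.rpow_add two_pos]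
    norm_num
  have ha6c : (((2:ℝ)^((1:ℝ)/6) : ℝ) : ℂ)^6 = 2 := by exact_mod_cast congrArg Complex.ofReal ha6
  rw [Matrix.det_fin_three]
  simp [PhiMap, exampleX, Fin.sum_univ_three, Matrix.vecHead, Matrix.vecTail]
  rw [h1, h2]
  push_cast
  rw [show (6⁻¹:ℝ) = (1:ℝ)/6 by norm_num]
  linear_combination ((7/4) * (((2:ℝ)^((1:ℝ)/6):ℝ):ℂ)^6 - 1/2) * ha6c

lemma hnotPSD : ¬ (PhiMap !![1/2, 1, 0; 0, 1, 1; 1, 0, 2] exampleX).PosSemidef := by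
  intro h
  have hd := h.isHermitian.det_eq_prod_eigenvalues
  rw [hdet] at hd
  have hnn : (0:ℝ) ≤ ∏ i, h.isHermitian.eigenvalues i :=
    Finset.prod_nonneg fun i _ => h.eigenvalues_nonneg i
  have : (-1 : ℝ) = ∏ i, h.isHermitian.eigenvalues i := by
    exact_mod_cast congrArg Complex.re hd
  linarith

/-- For `A` with rows `(1/2,1,0)`, `(0,1,1)`, `(1,0,2)`, the map `Φ_A` is
not positive: the matrix `X` above is positive semidefinite of rank one, yet `Φ_A(X)`
has determinant `-1` and hence is not positive semidefinite. -/
theorem phiMap_counterexample :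
    ¬ IsPosMap (PhiMap !![1/2, 1, 0; 0, 1, 1; 1, 0, 2]) ∧
    exampleX.PosSemidef ∧ exampleX.rank = 1 ∧
    (PhiMap !![1/2, 1, 0; 0, 1, 1; 1, 0, 2] exampleX).det = -1 ∧
    ¬ (PhiMap !![1/2, 1, 0; 0, 1, 1; 1, 0, 2] exampleX).PosSemidef :=
  ⟨fun h => hnotPSD (h _ hPSD), hPSD, hrank, hdet, hnotPSD⟩
end
end
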